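/- Let G be a finite edge-coloured graph with minimum degree δ(G) > 0 and let k be a positive integer. Then h_{2k}(1, 2k) = max over 1 ≤ i < j ≤ 2k of h_{2k}(i, j). -/

import Mathlib

open SimpleGraph Finset
open scoped Classical

/-- The cyclic successor of an index `i : Fin m` (i.e. `i + 1` mod `m`). -/
def cyclicSucc {m : ℕ} (i : Fin m) : Fin m := ⟨(i.val + 1) % m, Nat.mod_lt _ i.pos⟩

/-- `u : Fin m → V` is a homomorphic cycle of length `m` in `G`: consecutive vertices
(cyclically, indices mod `m`) are adjacent. -/
def IsHomCycle {V : Type} (G : SimpleGraph V) {m : ℕ} (u : Fin m → V) : Prop :=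
  ∀ i : Fin m, G.Adj (u i) (u (cyclicSucc i))

/-- `h_m`: the sum of the weights `1/∏ᵢ d(uᵢ)` of all homomorphic cycles of length `m`
in `G`. -/
noncomputable def homCycleSum {V : Type} [Fintype V] (G : SimpleGraph V)
    [DecidableRel G.Adj] (m : ℕ) : ℝ :=
  ∑ u : Fin m → V, if IsHomCycle G u then ∏ i, ((G.degree (u i) : ℝ))⁻¹ else 0

/-- `h_m(a+1, b+1)` (edges indexed so that the `a`-th edge of the cycle is
`u_a u_{a+1}`): the sum of the weights of the homomorphic `m`-cycles whose edges
`u_a u_{a+1}` and `u_b u_{b+1}` receive the same colour under `c`. -/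
noncomputable def homCyclePairSum {V : Type} [Fintype V] (G : SimpleGraph V)
    [DecidableRel G.Adj] {β : Type} (c : Sym2 V → β) {m : ℕ} (a b : Fin m) : ℝ :=
  ∑ u : Fin m → V,
    if IsHomCycle G u ∧ c s(u a, u (cyclicSucc a)) = c s(u b, u (cyclicSucc b)) then
      ∏ i, ((G.degree (u i) : ℝ))⁻¹
    else 0

namespace HCP

lemma cyclicSucc_eq {m : ℕ} [NeZero m] (i : Fin m) : cyclicSucc i = i + 1 := by
  apply Fin.ext
  rw [Fin.add_def, Fin.val_one']
  show (i.val + 1) % m = _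
  conv_lhs => rw [← Nat.add_mod_mod]

variable {V : Type}

/-- cons, non-dependent -/
def pc {t : ℕ} (x : V) (v : Fin t → V) : Fin (t+1) → V := Fin.cons x v
/-- snoc, non-dependent -/
def ps {t : ℕ} (v : Fin t → V) (y : V) : Fin (t+1) → V := Fin.snoc v y

@[simp] lemma pc_zero {t : ℕ} (x : V) (v : Fin t → V) : pc x v 0 = x := rfl
@[simp] lemma pc_succ {t : ℕ} (x : V) (v : Fin t → V) (j : Fin t) : pc x v j.succ = v j := by
  simp [pc]
@[simp] lemma ps_cast {t : ℕ} (v : Fin t → V) (y : V) (j : Fin t) :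
    ps v y j.castSucc = v j := by simp [ps]
@[simp] lemma ps_last {t : ℕ} (v : Fin t → V) (y : V) : ps v y (Fin.last t) = y := by
  simp [ps]
@[simp] lemma pc_tail {t : ℕ} (x : V) (v : Fin t → V) :
    Fin.tail (pc x v) = v := rfl
lemma pc_eta {t : ℕ} (v : Fin (t+1) → V) : pc (v 0) (Fin.tail v) = v :=
  Fin.cons_self_tail v

lemma ps_succ {t : ℕ} (v : Fin (t+1) → V) (y : V) (i : Fin (t+1)) :
    ps v y i.succ = ps (Fin.tail v) y i := by
  refine Fin.lastCases ?_ (fun j => ?_) i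
  · rw [Fin.succ_last, ps_last, ps_last]
  · rw [Fin.succ_castSucc, ps_cast, ps_cast]
    rfl

lemma ps_zero {t : ℕ} (v : Fin (t+1) → V) (y : V) : ps v y 0 = v 0 := by
  have : (0 : Fin (t+2)) = Fin.castSucc 0 := rfl
  rw [this, ps_cast]

lemma pc_add_one {t : ℕ} (x : V) (v : Fin t → V) (i : Fin (t+1)) :
    pc x v (i + 1) = ps v x i := by
  refine Fin.lastCases ?_ (fun j => ?_) i
  · rw [Fin.last_add_one, pc_zero, ps_last]
  · rw [Fin.coeSucc_eq_succ, pc_succ, ps_cast]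

variable [Fintype V]

/-- Generic transfer composition: `t+1` kernels composed. -/
noncomputable def S : (t : ℕ) → (Fin (t+1) → V → V → ℝ) → V → V → ℝ
  | 0, g, x, y => g 0 x y
  | (t+1), g, x, y => ∑ z, g 0 x z * S t (Fin.tail g) z y

lemma S_succ {t : ℕ} (g : Fin (t+2) → V → V → ℝ) (x y : V) :
    S (t+1) g x y = ∑ z, g 0 x z * S t (Fin.tail g) z y := rfl

lemma S_path : ∀ (t : ℕ) (g : Fin (t+1) → V → V → ℝ) (x y : V),
    (∑ v : Fin t → V, ∏ i : Fin (t+1), g i (pc x v i) (ps v y i)) = S t g x y := by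
  intro t
  induction t with
  | zero =>
    intro g x y
    have : ∀ v : Fin 0 → V, (∏ i : Fin 1, g i (pc x v i) (ps v y i)) = g 0 x y := by
      intro v
      rw [Fin.prod_univ_one, pc_zero, show (0 : Fin 1) = Fin.last 0 from rfl, ps_last]
    rw [Finset.sum_congr rfl (fun v _ => this v)]
    simp [S]
  | succ t ih =>
    intro g x y
    rw [S_succ]
    have key : ∀ (z : V) (w : Fin t → V),
        (∏ i : Fin (t+2), g i (pc x (pc z w) i) (ps (pc z w) y i))
          = g 0 x z * ∏ i : Fin (t+1), (Fin.tail g) i (pc z w i) (ps w y i) := by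
      intro z w
      rw [Fin.prod_univ_succ]
      congr 1
      · refine Finset.prod_congr rfl (fun i _ => ?_)
        rw [pc_succ, ps_succ, pc_tail]
        rfl
    have e1 := Fintype.sum_equiv (Fin.consEquiv (fun _ : Fin (t+1) => V))
      (fun p : V × (Fin t → V) =>
        ∏ i : Fin (t+2), g i (pc x (pc p.1 p.2) i) (ps (pc p.1 p.2) y i))
      (fun v : Fin (t+1) → V => ∏ i : Fin (t+2), g i (pc x v i) (ps v y i))
      (fun p => rfl)
    rw [← e1]
    rw [Fintype.sum_prod_type]
    refine Finset.sum_congr rfl (fun z _ => ?_)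
    rw [Finset.sum_congr rfl (fun w _ => key z w), ← Finset.mul_sum, ih]

lemma S_cycle (t : ℕ) (g : Fin (t+1) → V → V → ℝ) :
    (∑ u : Fin (t+1) → V, ∏ i : Fin (t+1), g i (u i) (u (i + 1))) = ∑ x, S t g x x := by
  have e1 := Fintype.sum_equiv (Fin.consEquiv (fun _ : Fin (t+1) => V))
    (fun p : V × (Fin t → V) => ∏ i : Fin (t+1), g i (pc p.1 p.2 i) (pc p.1 p.2 (i+1)))
    (fun u : Fin (t+1) → V => ∏ i : Fin (t+1), g i (u i) (u (i+1))) (fun p => rfl)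
  rw [← e1]
  rw [Fintype.sum_prod_type]
  refine Finset.sum_congr rfl (fun x _ => ?_)
  rw [← S_path t g x x]
  refine Finset.sum_congr rfl (fun v _ => Finset.prod_congr rfl (fun i _ => ?_))
  rw [pc_add_one]

variable {β : Type} (G : SimpleGraph V) [DecidableRel G.Adj] (c : Sym2 V → β)

noncomputable def ek : V → V → ℝ := fun x y =>
  if G.Adj x y then (Real.sqrt (G.degree x))⁻¹ * (Real.sqrt (G.degree y))⁻¹ else 0

noncomputable def ea (α : β) : V → V → ℝ := fun x y =>
  if G.Adj x y ∧ c s(x, y) = α then (Real.sqrt (G.degree x))⁻¹ * (Real.sqrt (G.degree y))⁻¹ else 0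

lemma ek_symm (x y : V) : ek G x y = ek G y x := by
  unfold ek
  by_cases h : G.Adj x y
  · rw [if_pos h, if_pos h.symm, mul_comm]
  · rw [if_neg h, if_neg (fun hh => h hh.symm)]

lemma ea_symm (α : β) (x y : V) : ea G c α x y = ea G c α y x := by
  unfold ea
  have h1 : (G.Adj x y ∧ c s(x, y) = α) ↔ (G.Adj y x ∧ c s(y, x) = α) := by
    rw [SimpleGraph.adj_comm, Sym2.eq_swap]
  exact if_congr h1 (mul_comm _ _) rfl

noncomputable def f : ℕ → V → V → ℝ
  | 0 => fun x y => if x = y then 1 else 0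
  | (t+1) => fun x y => ∑ z, ek G x z * f t z y

lemma f_zero (x y : V) : f G 0 x y = if x = y then 1 else 0 := rfl
lemma f_succ (t : ℕ) (x y : V) : f G (t+1) x y = ∑ z, ek G x z * f G t z y := rfl

lemma sum_f_zero_mul (x : V) (F : V → ℝ) : (∑ z, f G 0 x z * F z) = F x := by
  simp [f_zero]

lemma sum_mul_f_zero (y : V) (F : V → ℝ) : (∑ z, F z * f G 0 z y) = F y := by
  simp [f_zero, eq_comm]

lemma f_one (x y : V) : f G 1 x y = ek G x y := by
  rw [f_succ]
  simp [f_zero]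

lemma f_add (s t : ℕ) (x y : V) : f G (s + t) x y = ∑ z, f G s x z * f G t z y := by
  induction s generalizing x with
  | zero => rw [Nat.zero_add, sum_f_zero_mul]
  | succ s ih =>
    have h1 : s + 1 + t = (s + t) + 1 := by omega
    rw [h1, f_succ]
    rw [Finset.sum_congr rfl (fun z _ => by rw [ih z])]
    rw [Finset.sum_congr rfl (fun z _ => Finset.mul_sum _ _ _)]
    rw [Finset.sum_comm]
    refine Finset.sum_congr rfl (fun w _ => ?_)
    rw [f_succ, Finset.sum_mul]
    exact Finset.sum_congr rfl (fun z _ => (mul_assoc _ _ _).symm)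

lemma f_symm (t : ℕ) (x y : V) : f G t x y = f G t y x := by
  induction t generalizing x y with
  | zero => simp [f_zero, eq_comm]
  | succ t ih =>
    rw [f_succ, show t + 1 = t + 1 from rfl]
    have : f G (t + 1) y x = ∑ z, f G t y z * f G 1 z x := f_add G t 1 y x
    rw [this]
    refine Finset.sum_congr rfl (fun z _ => ?_)
    rw [f_one, ih z y, ek_symm, mul_comm]

lemma S_const (t : ℕ) (x y : V) : S t (fun _ : Fin (t+1) => ek G) x y = f G (t+1) x y := by
  induction t generalizing x with
  | zero => rw [f_one]; rfl
  | succ t ih =>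
    rw [S_succ, f_succ]
    refine Finset.sum_congr rfl (fun z _ => ?_)
    congr 1
    have ht : Fin.tail (fun _ : Fin (t+2) => ek G) = (fun _ : Fin (t+1) => ek G) := rfl
    rw [ht, ih]

lemma S_one (t : ℕ) (j : Fin (t+1)) (h : V → V → ℝ) (x y : V) :
    S t (fun i => if i = j then h else ek G) x y
      = ∑ z, ∑ w, f G j.val x z * h z w * f G (t - j.val) w y := by
  induction t generalizing x y with
  | zero =>
    have hj : j = 0 := by apply Fin.ext; omega
    subst hj
    show (if (0 : Fin 1) = 0 then h else ek G) x y = _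
    rw [if_pos rfl]
    have hv : ((0 : Fin (0+1)) : ℕ) = 0 := rfl
    rw [hv, Nat.sub_zero]
    rw [Finset.sum_congr rfl (fun z _ => by
      rw [Finset.sum_congr rfl (fun w _ => mul_assoc _ _ _), ← Finset.mul_sum])]
    rw [sum_f_zero_mul G x (fun z => ∑ w, h z w * f G 0 w y)]
    rw [sum_mul_f_zero G y (fun w => h x w)]
  | succ t ih =>
    refine Fin.cases ?_ (fun j' => ?_) j
    · rw [S_succ]
      have h0 : (if (0 : Fin (t+2)) = 0 then h else ek G) = h := if_pos rfl
      have ht : Fin.tail (fun i : Fin (t+2) => if i = 0 then h else ek G)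
          = (fun _ : Fin (t+1) => ek G) := by
        funext i
        show (if i.succ = 0 then h else ek G) = ek G
        rw [if_neg (Fin.succ_ne_zero i)]
      rw [h0, ht]
      have hv : ((0 : Fin (t+2)) : ℕ) = 0 := rfl
      rw [hv, Nat.sub_zero]
      rw [Finset.sum_congr rfl (fun z _ => by rw [S_const G t z y])]
      rw [show (∑ z, ∑ w, f G 0 x z * h z w * f G (t+1) w y)
          = ∑ z, f G 0 x z * ∑ w, h z w * f G (t+1) w y from
        Finset.sum_congr rfl (fun z _ => by
          rw [Finset.mul_sum]
          exact Finset.sum_congr rfl (fun w _ => (mul_assoc _ _ _)))]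
      rw [sum_f_zero_mul G x (fun z => ∑ w, h z w * f G (t+1) w y)]
    · rw [S_succ]
      have h0 : (if (0 : Fin (t+2)) = j'.succ then h else ek G) = ek G :=
        if_neg (by exact fun hh => (Fin.succ_ne_zero j') hh.symm)
      have ht : Fin.tail (fun i : Fin (t+2) => if i = j'.succ then h else ek G)
          = (fun i : Fin (t+1) => if i = j' then h else ek G) := by
        funext i
        show (if i.succ = j'.succ then h else ek G) = _
        by_cases hij : i = j'
        · rw [if_pos (by rw [hij]), if_pos hij]
        · rw [if_neg (fun hh => hij (Fin.succ_injective _ hh)), if_neg hij]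
      rw [h0, ht]
      rw [Finset.sum_congr rfl (fun z _ => by rw [ih j' z y])]
      have hv : (j'.succ : Fin (t+2)).val = j'.val + 1 := rfl
      rw [hv]
      have hsub : t + 1 - (j'.val + 1) = t - j'.val := by omega
      rw [hsub]
      -- LHS: ∑ z, ek x z * ∑ z' ∑ w, f j' z z' * h z' w * f (t-j') w y
      rw [Finset.sum_congr rfl (fun z _ => by rw [Finset.mul_sum])]
      rw [Finset.sum_comm]
      refine Finset.sum_congr rfl (fun z' _ => ?_)
      rw [Finset.sum_congr rfl (fun z _ => Finset.mul_sum _ _ _), Finset.sum_comm]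
      refine Finset.sum_congr rfl (fun w _ => ?_)
      rw [f_succ, Finset.sum_mul, Finset.sum_mul]
      refine Finset.sum_congr rfl (fun z _ => ?_)
      ring

lemma prod_ek_eq {m : ℕ} [NeZero m] (u : Fin m → V) (hH : IsHomCycle G u) :
    (∏ i : Fin m, ek G (u i) (u (i + 1))) = ∏ i : Fin m, ((G.degree (u i) : ℝ))⁻¹ := by
  have h1 : ∀ i : Fin m, ek G (u i) (u (i+1))
      = (Real.sqrt (G.degree (u i)))⁻¹ * (Real.sqrt (G.degree (u (i+1))))⁻¹ := by
    intro i
    have h := hH i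
    rw [cyclicSucc_eq] at h
    exact if_pos h
  rw [Finset.prod_congr rfl (fun i _ => h1 i), Finset.prod_mul_distrib]
  have h2 : (∏ i : Fin m, (Real.sqrt (G.degree (u (i+1))))⁻¹)
      = ∏ i : Fin m, (Real.sqrt (G.degree (u i)))⁻¹ :=
    (Fintype.prod_equiv (Equiv.addRight (1 : Fin m))
      (fun i => (Real.sqrt (G.degree (u (i+1))))⁻¹)
      (fun i => (Real.sqrt (G.degree (u i)))⁻¹) (fun i => rfl))
  rw [h2, ← Finset.prod_mul_distrib]
  refine Finset.prod_congr rfl (fun i _ => ?_)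
  rw [← mul_inv, Real.mul_self_sqrt (by positivity)]

/-- the kernel family: positions `0` and `gp` carry the colour-`α` kernel. -/
noncomputable def gk (α : β) {mm : ℕ} [NeZero mm] (gp : Fin mm) : Fin mm → V → V → ℝ :=
  fun i => if i = 0 then ea G c α else if i = gp then ea G c α else ek G

lemma gk_zero_of_not_adj (α : β) {mm : ℕ} [NeZero mm] (gp i : Fin mm) {x y : V}
    (hna : ¬ G.Adj x y) : gk G c α gp i x y = 0 := by
  unfold gk ea ek
  split_ifs <;> simp only [] <;> rw [if_neg (by tauto)]

lemma ea_eq_ek (α : β) {x y : V} (h : c s(x, y) = α) : ea G c α x y = ek G x y := by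
  unfold ea ek
  exact if_congr (and_iff_left h) rfl rfl

lemma summand_eq {m : ℕ} [NeZero m] (gp : Fin m) (hg : gp ≠ 0) (u : Fin m → V) :
    (if IsHomCycle G u ∧ c s(u 0, u (cyclicSucc 0)) = c s(u gp, u (cyclicSucc gp)) then
        ∏ i, ((G.degree (u i) : ℝ))⁻¹ else 0)
      = ∑ α ∈ Finset.image c Finset.univ,
          ∏ i : Fin m, gk G c α gp i (u i) (u (i + 1)) := by
  simp only [cyclicSucc_eq]
  by_cases hH : IsHomCycle G u
  · by_cases hcol : c s(u 0, u (0 + 1)) = c s(u gp, u (gp + 1))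
    · rw [if_pos ⟨hH, hcol⟩]
      have hmem : c s(u 0, u (0+1)) ∈ Finset.image c Finset.univ :=
        Finset.mem_image.mpr ⟨s(u 0, u (0+1)), Finset.mem_univ _, rfl⟩
      rw [Finset.sum_eq_single_of_mem _ hmem ?_]
      · rw [← prod_ek_eq G u hH]
        refine Finset.prod_congr rfl (fun i _ => ?_)
        unfold gk
        by_cases hi0 : i = 0
        · subst hi0
          rw [if_pos rfl]
          exact (ea_eq_ek G c _ rfl).symm
        · rw [if_neg hi0]
          by_cases hig : i = gp
          · subst hig
            rw [if_pos rfl]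
            exact (ea_eq_ek G c _ hcol.symm).symm
          · rw [if_neg hig]
      · intro α _ hne
        refine Finset.prod_eq_zero (Finset.mem_univ (0 : Fin m)) ?_
        unfold gk
        rw [if_pos rfl]
        exact if_neg (fun h => hne h.2.symm)
    · rw [if_neg (fun h => hcol h.2)]
      symm
      refine Finset.sum_eq_zero (fun α _ => ?_)
      by_cases hα : c s(u 0, u (0 + 1)) = α
      · refine Finset.prod_eq_zero (Finset.mem_univ gp) ?_
        unfold gk
        rw [if_neg hg, if_pos rfl]
        exact if_neg (fun h => hcol (by rw [hα, h.2]))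
      · refine Finset.prod_eq_zero (Finset.mem_univ (0 : Fin m)) ?_
        unfold gk
        rw [if_pos rfl]
        exact if_neg (fun h => hα h.2)
  · rw [if_neg (fun h => hH h.1)]
    symm
    refine Finset.sum_eq_zero (fun α _ => ?_)
    rw [IsHomCycle] at hH
    push_neg at hH
    obtain ⟨i₀, hi₀⟩ := hH
    rw [cyclicSucc_eq] at hi₀
    exact Finset.prod_eq_zero (Finset.mem_univ i₀) (gk_zero_of_not_adj G c α gp i₀ hi₀)

/-- `F a b = ∑_α tr(S_α S^a S_α S^b)`. -/
noncomputable def FF (a b : ℕ) : ℝ :=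
  ∑ α ∈ Finset.image c Finset.univ, ∑ x, ∑ y, ∑ z, ∑ w,
    ea G c α x y * f G a y z * ea G c α z w * f G b w x

lemma pairSum_eq (n : ℕ) (gp : Fin (n+2)) (hg : gp ≠ 0) :
    homCyclePairSum G c (0 : Fin (n+2)) gp = FF G c (gp.val - 1) (n + 1 - gp.val) := by
  unfold homCyclePairSum
  rw [Finset.sum_congr rfl (fun u _ => summand_eq G c gp hg u)]
  rw [Finset.sum_comm]
  refine Finset.sum_congr rfl (fun α _ => ?_)
  rw [S_cycle (n+1) (gk G c α gp)]
  refine Finset.sum_congr rfl (fun x _ => ?_)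
  rw [S_succ]
  have h0 : (gk G c α gp) 0 = ea G c α := if_pos rfl
  have ht : Fin.tail (gk G c α gp) = fun i : Fin (n+1) =>
      if i = gp.pred hg then ea G c α else ek G := by
    funext i
    show gk G c α gp i.succ = _
    unfold gk
    rw [if_neg (Fin.succ_ne_zero i)]
    by_cases hig : i = gp.pred hg
    · rw [if_pos (by rw [hig, Fin.succ_pred]), if_pos hig]
    · have hsucc : i.succ ≠ gp := fun h => hig (by
        apply Fin.succ_injective
        rw [Fin.succ_pred, h])
      rw [if_neg hsucc, if_neg hig]
  rw [h0, ht]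
  rw [Finset.sum_congr rfl (fun z _ => by
    rw [S_one G n (gp.pred hg) (ea G c α) z x])]
  have hval : ((gp.pred hg : Fin (n+1)) : ℕ) = gp.val - 1 := rfl
  have hgp1 : (gp : ℕ) ≠ 0 := fun h => hg (Fin.ext h)
  have hsub : n - ((gp.pred hg : Fin (n+1)) : ℕ) = n + 1 - gp.val := by
    rw [hval]; omega
  rw [hsub, hval]
  rw [Finset.sum_congr rfl (fun y _ => by
    rw [Finset.mul_sum])]
  refine Finset.sum_congr rfl (fun y _ => ?_)
  rw [Finset.sum_congr rfl (fun z _ => by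
    rw [Finset.mul_sum])]
  refine Finset.sum_congr rfl (fun z _ => ?_)
  refine Finset.sum_congr rfl (fun w _ => ?_)
  ring

lemma pairSum_rot {m : ℕ} [NeZero m] (a b t : Fin m) :
    homCyclePairSum G c a b = homCyclePairSum G c (a + t) (b + t) := by
  unfold homCyclePairSum
  refine Fintype.sum_equiv (Equiv.arrowCongr (Equiv.addRight t) (Equiv.refl V))
    _ _ (fun u => ?_)
  have hv : ∀ i : Fin m, (Equiv.arrowCongr (Equiv.addRight t) (Equiv.refl V) u) i
      = u (i - t) := fun i => by
    simp [Equiv.arrowCongr, Equiv.addRight, Equiv.subRight, sub_eq_add_neg]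
  have hHC : IsHomCycle G u ↔
      IsHomCycle G ((Equiv.arrowCongr (Equiv.addRight t) (Equiv.refl V)) u) := by
    constructor
    · intro h i
      rw [hv, hv, cyclicSucc_eq]
      have := h (i - t)
      rw [cyclicSucc_eq] at this
      have harith : i + 1 - t = i - t + 1 := by
        rw [sub_eq_add_neg, sub_eq_add_neg]; abel
      rw [harith]
      exact this
    · intro h i
      have := h (i + t)
      rw [hv, hv, cyclicSucc_eq] at this
      rw [cyclicSucc_eq]
      have h1 : i + t - t = i := by rw [sub_eq_add_neg]; abel
      have h2 : i + t + 1 - t = i + 1 := by rw [sub_eq_add_neg]; abel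
      rw [h1, h2] at this
      exact this
  have he1 : (Equiv.arrowCongr (Equiv.addRight t) (Equiv.refl V) u) (a + t) = u a := by
    rw [hv]; congr 1; rw [sub_eq_add_neg]; abel
  have he2 : (Equiv.arrowCongr (Equiv.addRight t) (Equiv.refl V) u) (cyclicSucc (a + t))
      = u (cyclicSucc a) := by
    rw [hv, cyclicSucc_eq, cyclicSucc_eq]; congr 1; rw [sub_eq_add_neg]; abel
  have he3 : (Equiv.arrowCongr (Equiv.addRight t) (Equiv.refl V) u) (b + t) = u b := by
    rw [hv]; congr 1; rw [sub_eq_add_neg]; abel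
  have he4 : (Equiv.arrowCongr (Equiv.addRight t) (Equiv.refl V) u) (cyclicSucc (b + t))
      = u (cyclicSucc b) := by
    rw [hv, cyclicSucc_eq, cyclicSucc_eq]; congr 1; rw [sub_eq_add_neg]; abel
  have hprod : (∏ i, ((G.degree (u i) : ℝ))⁻¹)
      = ∏ i, ((G.degree ((Equiv.arrowCongr (Equiv.addRight t) (Equiv.refl V) u) i) : ℝ))⁻¹ := by
    refine (Fintype.prod_equiv (Equiv.subRight t)
      (fun i => ((G.degree ((Equiv.arrowCongr (Equiv.addRight t) (Equiv.refl V) u) i) : ℝ))⁻¹)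
      (fun i => ((G.degree (u i) : ℝ))⁻¹)
      (fun i => congrArg (fun v => ((G.degree v : ℝ))⁻¹) (hv i))).symm
  rw [he1, he2, he3, he4]
  exact if_congr (and_congr hHC Iff.rfl) hprod rfl

noncomputable def X (p q : ℕ) (α : β) (x y : V) : ℝ :=
  ∑ P : V × V, f G p x P.1 * ea G c α P.1 P.2 * f G q P.2 y

lemma X_symm (p q : ℕ) (α : β) (x y : V) : X G c p q α x y = X G c q p α y x := by
  unfold X
  refine Fintype.sum_equiv (Equiv.prodComm V V) _ _ (fun P => ?_)
  rw [f_symm G p x P.1, f_symm G q P.2 y, ea_symm G c α P.1 P.2]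
  show f G p P.1 x * ea G c α P.2 P.1 * f G q y P.2
    = f G q y P.2 * ea G c α P.2 P.1 * f G p P.1 x
  ring

lemma sum_pair_swap (H : V → V → ℝ) :
    (∑ z, ∑ w, H z w) = ∑ Q : V × V, H Q.2 Q.1 :=
  calc ∑ z, ∑ w, H z w = ∑ w, ∑ z, H z w := Finset.sum_comm
    _ = ∑ Q : V × V, H Q.2 Q.1 := (Fintype.sum_prod_type (fun Q : V × V => H Q.2 Q.1)).symm

lemma sum_pair (H : V → V → ℝ) :
    (∑ z, ∑ w, H z w) = ∑ Q : V × V, H Q.1 Q.2 :=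
  (Fintype.sum_prod_type (fun Q : V × V => H Q.1 Q.2)).symm

lemma IP (p q r s : ℕ) :
    (∑ α ∈ Finset.image c Finset.univ, ∑ x, ∑ y, X G c p q α x y * X G c r s α x y)
      = FF G c (q + s) (p + r) := by
  unfold FF
  refine Finset.sum_congr rfl (fun α _ => ?_)
  have stepA : (∑ x, ∑ y, X G c p q α x y * X G c r s α x y)
      = ∑ P : V × V, ∑ Q : V × V,
          ea G c α P.1 P.2 * ea G c α Q.1 Q.2 * f G (p+r) P.1 Q.1 * f G (q+s) P.2 Q.2 := by
    have h1 : ∀ x y : V, X G c p q α x y * X G c r s α x y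
        = ∑ P : V × V, ∑ Q : V × V,
            (f G p x P.1 * ea G c α P.1 P.2 * f G q P.2 y)
              * (f G r x Q.1 * ea G c α Q.1 Q.2 * f G s Q.2 y) := fun x y =>
      Finset.sum_mul_sum _ _ _ _
    rw [Finset.sum_congr rfl (fun x _ => Finset.sum_congr rfl (fun y _ => h1 x y))]
    rw [Finset.sum_congr rfl (fun x _ => Finset.sum_comm)]
    rw [Finset.sum_congr rfl (fun x _ =>
      Finset.sum_congr rfl (fun P _ => Finset.sum_comm))]
    rw [Finset.sum_comm]
    rw [Finset.sum_congr rfl (fun P _ => Finset.sum_comm)]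
    refine Finset.sum_congr rfl (fun P _ => Finset.sum_congr rfl (fun Q _ => ?_))
    have hx : (∑ x, f G p x P.1 * f G r x Q.1) = f G (p+r) P.1 Q.1 := by
      rw [f_add G p r P.1 Q.1]
      exact Finset.sum_congr rfl (fun x _ => by rw [f_symm G p x P.1])
    have hy : (∑ y, f G q P.2 y * f G s Q.2 y) = f G (q+s) P.2 Q.2 := by
      rw [f_add G q s P.2 Q.2]
      exact Finset.sum_congr rfl (fun y _ => by rw [f_symm G s y Q.2])
    have hinner : ∀ x, (∑ y, (f G p x P.1 * ea G c α P.1 P.2 * f G q P.2 y)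
          * (f G r x Q.1 * ea G c α Q.1 Q.2 * f G s Q.2 y))
        = (ea G c α P.1 P.2 * ea G c α Q.1 Q.2) * (f G p x P.1 * f G r x Q.1)
            * (∑ y, f G q P.2 y * f G s Q.2 y) := by
      intro x
      rw [Finset.mul_sum]
      exact Finset.sum_congr rfl (fun y _ => by ring)
    rw [Finset.sum_congr rfl (fun x _ => hinner x)]
    rw [← Finset.sum_mul, ← Finset.mul_sum, hx, hy]
  rw [stepA]
  rw [Finset.sum_congr rfl (fun x _ => Finset.sum_congr rfl (fun y _ =>
    sum_pair_swap (fun z w => ea G c α x y * f G (q+s) y z * ea G c α z w * f G (p+r) w x)))]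
  rw [sum_pair (fun x y => ∑ Q : V × V,
    ea G c α x y * f G (q+s) y Q.2 * ea G c α Q.2 Q.1 * f G (p+r) Q.1 x)]
  refine Finset.sum_congr rfl (fun P _ => Finset.sum_congr rfl (fun Q _ => ?_))
  rw [ea_symm G c α Q.2 Q.1, f_symm G (p+r) Q.1 P.1]
  ring

lemma flatten (H : β → V → V → ℝ) :
    (∑ α ∈ Finset.image c Finset.univ, ∑ x, ∑ y, H α x y)
      = ∑ t ∈ (Finset.image c Finset.univ) ×ˢ ((Finset.univ : Finset V) ×ˢ Finset.univ),
          H t.1 t.2.1 t.2.2 := by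
  rw [Finset.sum_product]
  exact Finset.sum_congr rfl (fun α _ => by rw [Finset.sum_product])

lemma CSineq (p q r s : ℕ) :
    FF G c (q+s) (p+r) ^ 2 ≤ FF G c (q+q) (p+p) * FF G c (s+s) (r+r) := by
  rw [← IP G c p q r s, ← IP G c p q p q, ← IP G c r s r s]
  rw [flatten c (fun α x y => X G c p q α x y * X G c r s α x y),
      flatten c (fun α x y => X G c p q α x y * X G c p q α x y),
      flatten c (fun α x y => X G c r s α x y * X G c r s α x y)]
  have h := Finset.sum_mul_sq_le_sq_mul_sq
    ((Finset.image c Finset.univ) ×ˢ ((Finset.univ : Finset V) ×ˢ Finset.univ))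
    (fun t => X G c p q t.1 t.2.1 t.2.2) (fun t => X G c r s t.1 t.2.1 t.2.2)
  simpa only [pow_two] using h

lemma FF_symm (a b : ℕ) : FF G c a b = FF G c b a := by
  have h1 := IP G c 0 a b 0
  have h2 := IP G c a 0 0 b
  rw [show a + 0 = a by ring, show (0:ℕ) + b = b by ring] at h1 h2
  rw [← h1, ← h2]
  refine Finset.sum_congr rfl (fun α _ => ?_)
  rw [Finset.sum_comm]
  refine Finset.sum_congr rfl (fun y _ => Finset.sum_congr rfl (fun x _ => ?_))
  rw [X_symm G c 0 a, X_symm G c b 0]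

lemma T_nonneg (n : ℕ) : 0 ≤ FF G c 0 (n + n) := by
  have h := IP G c n 0 n 0
  rw [show (0:ℕ) + 0 = 0 from rfl] at h
  rw [← h]
  exact Finset.sum_nonneg fun α _ => Finset.sum_nonneg fun x _ =>
    Finset.sum_nonneg fun y _ => mul_self_nonneg _

lemma FF_le (n a b : ℕ) (hab : a + b = n + n) : FF G c a b ≤ FF G c (n + n) 0 := by
  have hne : ((Finset.range (n + n + 1)).image
      (fun a => FF G c a (n + n - a))).Nonempty :=
    ⟨FF G c 0 (n+n), Finset.mem_image.mpr ⟨0, Finset.mem_range.mpr (by omega),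
      by rw [Nat.sub_zero]⟩⟩
  set M := ((Finset.range (n + n + 1)).image (fun a => FF G c a (n + n - a))).max' hne
    with hM
  have hle : ∀ a', a' ≤ n + n → FF G c a' (n + n - a') ≤ M := by
    intro a' ha'
    refine Finset.le_max' ((Finset.range (n + n + 1)).image
        (fun a => FF G c a (n + n - a))) _
      (Finset.mem_image.mpr ⟨a', Finset.mem_range.mpr ?_, rfl⟩)
    omega
  obtain ⟨a₀, ha₀r, hMa⟩ := Finset.mem_image.mp (Finset.max'_mem _ hne)
  have ha₀ : a₀ ≤ n + n := by have := Finset.mem_range.mp ha₀r; omega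
  obtain ⟨a₁, ha₁n, hMa₁⟩ : ∃ a₁, a₁ ≤ n ∧ FF G c a₁ (n + n - a₁) = M := by
    by_cases hc : a₀ ≤ n
    · exact ⟨a₀, hc, hMa⟩
    · refine ⟨n + n - a₀, by omega, ?_⟩
      rw [show n + n - (n + n - a₀) = a₀ by omega, FF_symm]
      exact hMa
  have hCS := CSineq G c (n - a₁) a₁ n 0
  rw [show a₁ + 0 = a₁ by ring, show (n - a₁) + n = n + n - a₁ by omega,
      show (n - a₁) + (n - a₁) = n + n - (a₁ + a₁) by omega,
      show (0:ℕ) + 0 = 0 from rfl] at hCS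
  have h1 : FF G c (a₁ + a₁) (n + n - (a₁ + a₁)) ≤ M := hle (a₁ + a₁) (by omega)
  have hT0 : 0 ≤ FF G c 0 (n + n) := T_nonneg G c n
  have hTM : FF G c 0 (n + n) ≤ M := by
    have := hle 0 (by omega)
    rw [Nat.sub_zero] at this
    exact this
  have hab' : FF G c a b ≤ M := by
    have := hle a (by omega)
    rw [show n + n - a = b by omega] at this
    exact this
  rw [FF_symm G c (n + n) 0]
  nlinarith [hMa₁, hCS, h1, hT0, hTM, hab',
    mul_nonneg (sub_nonneg.mpr h1) hT0, sq_nonneg (M - FF G c 0 (n + n))]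

lemma pairSum_eq' {m : ℕ} (hm : 2 ≤ m) (gp : Fin m) (hg : gp.val ≠ 0) :
    homCyclePairSum G c (⟨0, by omega⟩ : Fin m) gp
      = FF G c (gp.val - 1) (m - 1 - gp.val) := by
  obtain ⟨n, rfl⟩ : ∃ n, m = n + 2 := ⟨m - 2, by omega⟩
  have h0 : (⟨0, by omega⟩ : Fin (n+2)) = 0 := rfl
  rw [h0, pairSum_eq G c n gp (fun h => hg (by rw [h]; rfl))]
  have hq : n + 1 - gp.val = n + 2 - 1 - gp.val := by omega
  rw [hq]

end HCP

set_option maxHeartbeats 2000000 in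
/-- For a finite edge-coloured graph `G` with `δ(G) > 0` and `k ≥ 1`:
`h_{2k}(1, 2k) = max_{1 ≤ i < j ≤ 2k} h_{2k}(i, j)`. (Here `h_{2k}(i, j)` compares the
colours of the edges `u_{i-1} u_i` and `u_{j-1} u_j`, so it corresponds to
`homCyclePairSum` with `0`-based edge indices `i-1` and `j-1`.) -/
theorem homCyclePairSum_isGreatest {V : Type} [Fintype V] (G : SimpleGraph V)
    [DecidableRel G.Adj] (hδ : 0 < G.minDegree) {β : Type} (c : Sym2 V → β)
    (k : ℕ) (hk : 0 < k) :
    IsGreatest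
      {x : ℝ | ∃ (i j : ℕ) (_ : 1 ≤ i) (_ : i < j) (_ : j ≤ 2 * k),
        x = homCyclePairSum G c (m := 2 * k) ⟨i - 1, by omega⟩ ⟨j - 1, by omega⟩}
      (homCyclePairSum G c (m := 2 * k) ⟨0, by omega⟩ ⟨2 * k - 1, by omega⟩) := by
  have hk2 : 2 ≤ 2 * k := by omega
  haveI : NeZero (2 * k) := ⟨by omega⟩
  constructor
  · have hFin : (⟨1 - 1, by omega⟩ : Fin (2 * k)) = ⟨0, by omega⟩ := rfl
    exact ⟨1, 2 * k, le_refl 1, by omega, le_refl _, by rw [hFin]⟩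
  · rintro x ⟨i, j, hi, hij, hjk, rfl⟩
    set a : Fin (2 * k) := ⟨i - 1, by omega⟩ with ha
    set b : Fin (2 * k) := ⟨j - 1, by omega⟩ with hb
    rw [HCP.pairSum_rot G c a b (-a)]
    have h1 : a + -a = (⟨0, by omega⟩ : Fin (2 * k)) := by
      rw [add_neg_cancel]
      apply Fin.ext
      show _ = 0
      exact Fin.val_zero _
    have h2 : b + -a = (⟨j - i, by omega⟩ : Fin (2 * k)) := by
      apply Fin.ext
      show (b + -a).val = j - i
      rw [Fin.val_add]
      have hnv : (-a).val = (2*k - (i-1)) % (2*k) := rfl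
      rw [hnv, Nat.add_mod_mod]
      have hx : b.val + (2*k - (i-1)) = 2*k + (j - i) := by
        show (j-1) + (2*k - (i-1)) = 2*k + (j-i)
        omega
      rw [hx, Nat.add_mod_left, Nat.mod_eq_of_lt (by omega)]
    rw [h1, h2]
    have e1 : homCyclePairSum G c (⟨0, by omega⟩ : Fin (2 * k)) ⟨j - i, by omega⟩
        = HCP.FF G c ((j - i) - 1) (2*k - 1 - (j - i)) :=
      HCP.pairSum_eq' G c hk2 ⟨j - i, by omega⟩ (show j - i ≠ 0 by omega)
    have e2 : homCyclePairSum G c (⟨0, by omega⟩ : Fin (2 * k)) ⟨2 * k - 1, by omega⟩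
        = HCP.FF G c ((2*k - 1) - 1) (2*k - 1 - (2*k - 1)) :=
      HCP.pairSum_eq' G c hk2 ⟨2*k - 1, by omega⟩ (show 2*k - 1 ≠ 0 by omega)
    rw [e1, e2]
    rw [show (2*k - 1) - 1 = (k-1) + (k-1) by omega,
        show 2*k - 1 - (2*k - 1) = 0 by omega]
    exact HCP.FF_le G c (k-1) ((j - i) - 1) (2*k - 1 - (j - i)) (by omega)
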